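/- Let F be a connected weighted graph with weight function w : E(F) → [0,∞). For x ≥ 0 let F^{≤x} denote the spanning subgraph of F consisting of the edges of weight at most x, and let cc(F^{≤x}) denote its number of connected components. Then MST(F) = ∫_0^∞ (cc(F^{≤x}) − 1) dx. -/

import Mathlib

open MeasureTheory

/-- The weight of a minimum spanning tree of the graph `G` with edge weights `w`. -/
noncomputable def MSTweight {V : Type*} [Fintype V] (G : SimpleGraph V) (w : Sym2 V → ℝ) : ℝ :=
  sInf {x : ℝ | ∃ T : SimpleGraph V, T ≤ G ∧ T.IsTree ∧ x = ∑ᶠ e ∈ T.edgeSet, w e}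

/-- The spanning subgraph `F^{≤x}` of `F` consisting of the edges of weight at most `x`. -/
def levelGraph {V : Type*} (F : SimpleGraph V) (w : Sym2 V → ℝ) (x : ℝ) : SimpleGraph V where
  Adj a b := F.Adj a b ∧ w s(a, b) ≤ x
  symm := by
    constructor
    intro a b h
    exact ⟨h.1.symm, by rw [Sym2.eq_swap]; exact h.2⟩
  loopless := ⟨fun a h => F.loopless.irrefl a h.1⟩

section Aux

open SimpleGraph

variable {V : Type*}

lemma aux_reach_lift {G G' : SimpleGraph V}
    (h : ∀ a b : V, G.Adj a b → G'.Reachable a b) {u v : V} (huv : G.Reachable u v) :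
    G'.Reachable u v := by
  obtain ⟨W⟩ := huv
  induction W with
  | nil => exact Reachable.refl _
  | cons ha _ ih => exact (h _ _ ha).trans ih

lemma aux_delete_cases {G : SimpleGraph V} (p q : V) {u v : V}
    (huv : G.Reachable u v) :
    (G.deleteEdges {s(p,q)}).Reachable u v ∨
      ((G.deleteEdges {s(p,q)}).Reachable u p ∧ (G.deleteEdges {s(p,q)}).Reachable q v) ∨
      ((G.deleteEdges {s(p,q)}).Reachable u q ∧ (G.deleteEdges {s(p,q)}).Reachable p v) := by
  set G' := G.deleteEdges {s(p,q)} with hG'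
  obtain ⟨W⟩ := huv
  induction W with
  | nil => exact Or.inl (Reachable.refl _)
  | @cons a b d hab W ih =>
    by_cases he : s(a, b) = s(p, q)
    · rcases Sym2.eq_iff.mp he with ⟨rfl, rfl⟩ | ⟨rfl, rfl⟩
      · rcases ih with h | ⟨h1, h2⟩ | ⟨h1, h2⟩
        · exact Or.inr (Or.inl ⟨Reachable.refl _, h⟩)
        · exact Or.inl (h1.symm.trans h2)
        · exact Or.inl h2
      · rcases ih with h | ⟨h1, h2⟩ | ⟨h1, h2⟩
        · exact Or.inr (Or.inr ⟨Reachable.refl _, h⟩)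
        · exact Or.inl h2
        · exact Or.inl (h1.symm.trans h2)
    · have hadj : G'.Adj a b := by
        rw [hG', deleteEdges_adj]
        exact ⟨hab, by simpa using he⟩
      rcases ih with h | ⟨h1, h2⟩ | ⟨h1, h2⟩
      · exact Or.inl (hadj.reachable.trans h)
      · exact Or.inr (Or.inl ⟨hadj.reachable.trans h1, h2⟩)
      · exact Or.inr (Or.inr ⟨hadj.reachable.trans h1, h2⟩)

lemma aux_cc_finite [Finite V] (G : SimpleGraph V) : Finite G.ConnectedComponent :=
  Finite.of_surjective G.connectedComponentMk (fun c => c.ind fun v => ⟨v, rfl⟩)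

lemma aux_isAcyclic_mono {G H : SimpleGraph V} (hle : H ≤ G) (hG : G.IsAcyclic) :
    H.IsAcyclic := by
  intro v c hc
  exact hG (c.transfer G fun e he => edgeSet_mono hle (c.edges_subset_edgeSet he))
    (hc.transfer _)

lemma aux_card_cc_bridge [Finite V] {G : SimpleGraph V} {p q : V}
    (hpq : G.Adj p q)
    (hbr : ¬ (G.deleteEdges {s(p,q)}).Reachable p q) :
    Nat.card (G.deleteEdges {s(p,q)}).ConnectedComponent
      = Nat.card G.ConnectedComponent + 1 := by
  classical
  set G' := G.deleteEdges {s(p,q)} with hG'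
  haveI hfin : Finite G.ConnectedComponent := aux_cc_finite G
  haveI hfin' : Finite G'.ConnectedComponent := aux_cc_finite G'
  have hle : G' ≤ G := deleteEdges_le _
  set φ : G'.ConnectedComponent → G.ConnectedComponent :=
    ConnectedComponent.map (Hom.ofLE hle) with hφ
  have hφmk : ∀ v : V, φ (G'.connectedComponentMk v) = G.connectedComponentMk v :=
    fun v => rfl
  have hsurj : Function.Surjective φ := fun c => c.ind fun v => ⟨G'.connectedComponentMk v, rfl⟩
  have hne : G'.connectedComponentMk p ≠ G'.connectedComponentMk q :=
    fun h => hbr (ConnectedComponent.exact h)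
  have hkey : ∀ x y, φ x = φ y → x = y ∨
      (x = G'.connectedComponentMk p ∧ y = G'.connectedComponentMk q) ∨
      (x = G'.connectedComponentMk q ∧ y = G'.connectedComponentMk p) := by
    intro x y
    refine ConnectedComponent.ind₂ (fun u v h => ?_) x y
    have hr : G.Reachable u v := by
      rw [hφmk, hφmk] at h
      exact ConnectedComponent.exact h
    rcases aux_delete_cases p q hr with h' | ⟨h1, h2⟩ | ⟨h1, h2⟩
    · exact Or.inl (ConnectedComponent.sound h')
    · exact Or.inr (Or.inl ⟨ConnectedComponent.sound h1, (ConnectedComponent.sound h2).symm⟩)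
    · exact Or.inr (Or.inr ⟨ConnectedComponent.sound h1, (ConnectedComponent.sound h2).symm⟩)
  -- injection 1
  have hinj1 : Function.Injective (fun x : G'.ConnectedComponent =>
      if x = G'.connectedComponentMk q then (none : Option G.ConnectedComponent) else some (φ x)) := by
    intro x y h
    dsimp only at h
    by_cases hx : x = G'.connectedComponentMk q
    · by_cases hy : y = G'.connectedComponentMk q
      · exact hx.trans hy.symm
      · rw [if_pos hx, if_neg hy] at h
        exact absurd h.symm (Option.some_ne_none _)
    · by_cases hy : y = G'.connectedComponentMk q
      · rw [if_neg hx, if_pos hy] at h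
        exact absurd h (Option.some_ne_none _)
      · rw [if_neg hx, if_neg hy] at h
        have h' := Option.some_injective _ h
        rcases hkey x y h' with h'' | ⟨h1, h2⟩ | ⟨h1, h2⟩
        · exact h''
        · exact absurd h2 hy
        · exact absurd h1 hx
  -- section
  set s : G.ConnectedComponent → G'.ConnectedComponent := fun c =>
    if c = φ (G'.connectedComponentMk p) then G'.connectedComponentMk p
    else Function.surjInv hsurj c with hs
  have hsec : ∀ c, φ (s c) = c := by
    intro c
    by_cases hc : c = φ (G'.connectedComponentMk p)
    · have : s c = G'.connectedComponentMk p := by simp only [hs]; rw [if_pos hc]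
      rw [this, hc]
    · have : s c = Function.surjInv hsurj c := by simp only [hs]; rw [if_neg hc]
      rw [this]
      exact Function.surjInv_eq hsurj c
  have hmkpq : φ (G'.connectedComponentMk p) = φ (G'.connectedComponentMk q) := by
    rw [hφmk, hφmk]
    exact ConnectedComponent.sound hpq.reachable
  have hsq : ∀ c, s c ≠ G'.connectedComponentMk q := by
    intro c h
    by_cases hc : c = φ (G'.connectedComponentMk p)
    · have : s c = G'.connectedComponentMk p := by simp only [hs]; rw [if_pos hc]
      rw [this] at h
      exact hbr (ConnectedComponent.exact h)
    · apply hc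
      rw [← hsec c, h, hmkpq.symm]
  have hinj2 : Function.Injective (fun o : Option G.ConnectedComponent =>
      o.elim (G'.connectedComponentMk q) s) := by
    intro o o' h
    dsimp only at h
    match o, o' with
    | none, none => rfl
    | none, some c =>
      simp only [Option.elim] at h
      exact absurd h.symm (hsq c)
    | some c, none =>
      simp only [Option.elim] at h
      exact absurd h (hsq c)
    | some c, some c' =>
      simp only [Option.elim] at h
      rw [← hsec c, ← hsec c', h]
  haveI : Fintype G.ConnectedComponent := Fintype.ofFinite _
  haveI : Finite (Option G.ConnectedComponent) := inferInstance
  have h1 := Nat.card_le_card_of_injective _ hinj1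
  have h2 := Nat.card_le_card_of_injective _ hinj2
  rw [Finite.card_option] at h1 h2
  omega

lemma aux_card_cc_acyclic [Fintype V] :
    ∀ (n : ℕ) (G : SimpleGraph V), G.edgeSet.ncard = n → G.IsAcyclic →
      Nat.card G.ConnectedComponent + G.edgeSet.ncard = Fintype.card V := by
  intro n
  induction n with
  | zero =>
    intro G hn _
    have hempty : G.edgeSet = ∅ := (Set.ncard_eq_zero (Set.toFinite _)).mp hn
    have hbot : G = ⊥ := edgeSet_eq_empty.mp hempty
    subst hbot
    rw [hn, add_zero]
    have : Nat.card V = Nat.card (⊥ : SimpleGraph V).ConnectedComponent := by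
      apply Nat.card_eq_of_bijective (SimpleGraph.connectedComponentMk (⊥ : SimpleGraph V))
      constructor
      · intro u v h
        exact reachable_bot.mp (ConnectedComponent.exact h)
      · exact fun c => c.ind fun v => ⟨v, rfl⟩
    rw [← this, Nat.card_eq_fintype_card]
  | succ n ih =>
    intro G hn hacyc
    have hne : G.edgeSet.Nonempty := by
      rw [Set.nonempty_iff_ne_empty]
      intro h
      rw [h, Set.ncard_empty] at hn
      omega
    obtain ⟨e, he⟩ := hne
    obtain ⟨p, q, hpq⟩ : ∃ p q : V, s(p, q) ∈ G.edgeSet := Sym2.exists.mp ⟨e, he⟩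
    have hadj : G.Adj p q := hpq
    have hbridge : G.IsBridge s(p, q) := isAcyclic_iff_forall_adj_isBridge.mp hacyc hadj
    have hbr : ¬ (G.deleteEdges {s(p,q)}).Reachable p q := isBridge_iff.mp hbridge
    set G' := G.deleteEdges {s(p,q)} with hG'
    have hes : G'.edgeSet = G.edgeSet \ {s(p,q)} := edgeSet_deleteEdges _
    have hcard : G'.edgeSet.ncard = n := by
      rw [hes, Set.ncard_diff_singleton_of_mem hpq, hn]
      omega
    have hacyc' : G'.IsAcyclic := aux_isAcyclic_mono (deleteEdges_le _) hacyc
    have := ih G' hcard hacyc'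
    rw [aux_card_cc_bridge hadj hbr] at this
    rw [hn] at *
    rw [hcard] at this
    omega

lemma aux_exists_spanning_tree_aux [Fintype V] :
    ∀ (n : ℕ) (G : SimpleGraph V), G.edgeSet.ncard = n → G.Connected →
      ∃ T : SimpleGraph V, T ≤ G ∧ T.IsTree := by
  intro n
  induction n using Nat.strong_induction_on with
  | _ n ih =>
    intro G hn hconn
    by_cases hacyc : G.IsAcyclic
    · exact ⟨G, le_refl _, ⟨hconn, hacyc⟩⟩
    · rw [isAcyclic_iff_forall_adj_isBridge] at hacyc
      push_neg at hacyc
      obtain ⟨p, q, hadj, hnbr⟩ := hacyc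
      have hre : (G.deleteEdges {s(p,q)}).Reachable p q := by
        rw [isBridge_iff] at hnbr
        push_neg at hnbr
        exact hnbr
      set G' := G.deleteEdges {s(p,q)} with hG'
      have hconn' : G'.Connected := by
        have hpre : ∀ u v : V, G.Adj u v → G'.Reachable u v := by
          intro u v huv
          by_cases he : s(u,v) = s(p,q)
          · rcases Sym2.eq_iff.mp he with ⟨rfl, rfl⟩ | ⟨rfl, rfl⟩
            · exact hre
            · exact hre.symm
          · exact (SimpleGraph.deleteEdges_adj.mpr ⟨huv, by simpa using he⟩).reachable
        haveI := hconn.nonempty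
        exact Connected.mk (fun u v => aux_reach_lift hpre (hconn.preconnected u v))
      have hpos : 0 < G.edgeSet.ncard := (Set.ncard_pos (Set.toFinite _)).mpr ⟨s(p,q), hadj⟩
      have hcard : G'.edgeSet.ncard < n := by
        rw [hG', edgeSet_deleteEdges,
          Set.ncard_diff_singleton_of_mem (G.mem_edgeSet.mpr hadj)]
        omega
      obtain ⟨T, hle, hT⟩ := ih _ hcard G' rfl hconn'
      exact ⟨T, hle.trans (deleteEdges_le _), hT⟩

lemma aux_exists_spanning_tree [Fintype V] {G : SimpleGraph V} (hconn : G.Connected) :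
    ∃ T : SimpleGraph V, T ≤ G ∧ T.IsTree :=
  aux_exists_spanning_tree_aux _ G rfl hconn

lemma levelGraph_le (F : SimpleGraph V) (w : Sym2 V → ℝ) (x : ℝ) :
    levelGraph F w x ≤ F := fun _ _ h => h.1

lemma levelGraph_mono_graph {T F : SimpleGraph V} (h : T ≤ F) (w : Sym2 V → ℝ) (x : ℝ) :
    levelGraph T w x ≤ levelGraph F w x := fun _ _ ha => ⟨h ha.1, ha.2⟩

lemma levelGraph_mono_level (F : SimpleGraph V) (w : Sym2 V → ℝ) {x y : ℝ} (h : x ≤ y) :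
    levelGraph F w x ≤ levelGraph F w y := fun _ _ ha => ⟨ha.1, ha.2.trans h⟩

lemma levelGraph_edgeSet (F : SimpleGraph V) (w : Sym2 V → ℝ) (x : ℝ) :
    (levelGraph F w x).edgeSet = {e ∈ F.edgeSet | w e ≤ x} := by
  ext e
  induction e using Sym2.ind with
  | _ u v =>
    simp only [mem_edgeSet, Set.mem_setOf_eq]
    rfl

lemma wsum_eq (w : Sym2 V → ℝ) {s : Set (Sym2 V)} (hs : s.Finite) :
    ∑ᶠ e ∈ s, w e = ∑ e ∈ hs.toFinset, w e := by
  rw [← finsum_mem_coe_finset, hs.coe_toFinset]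

lemma aux_exchange [Fintype V] {F T : SimpleGraph V} {w : Sym2 V → ℝ}
    (hw : ∀ e ∈ F.edgeSet, 0 ≤ w e) (hTle : T ≤ F) (hT : T.IsTree)
    (hmin : ∀ T' : SimpleGraph V, T' ≤ F → T'.IsTree →
      (∑ᶠ e ∈ T.edgeSet, w e) ≤ ∑ᶠ e ∈ T'.edgeSet, w e)
    {a b : V} (hab : F.Adj a b) :
    (levelGraph T w (w s(a, b))).Reachable a b := by
  classical
  by_contra hcon
  set c := w s(a, b) with hc
  obtain ⟨W⟩ := hT.isConnected.preconnected a b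
  set P : T.Path a b := W.toPath with hPdef
  -- a heavy edge exists on P
  have hex : ∃ f ∈ (P : T.Walk a b).edges, c < w f := by
    by_contra h
    push_neg at h
    refine hcon ⟨(P : T.Walk a b).transfer (levelGraph T w c) fun e he => ?_⟩
    rw [levelGraph_edgeSet]
    exact ⟨(P : T.Walk a b).edges_subset_edgeSet he, h e he⟩
  obtain ⟨f, hfP, hfw⟩ := hex
  have hfT : f ∈ T.edgeSet := (P : T.Walk a b).edges_subset_edgeSet hfP
  revert hfP hfw hfT
  induction f using Sym2.ind with
  | _ p q =>
  intro hfP hfw hfT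
  have hadjpq : T.Adj p q := hfT
  have hbr : ¬ (T.deleteEdges {s(p,q)}).Reachable p q :=
    isBridge_iff.mp (isAcyclic_iff_forall_adj_isBridge.mp hT.IsAcyclic hadjpq)
  set Tm := T.deleteEdges {s(p,q)} with hTm
  have habne : a ≠ b := hab.ne
  -- s(a,b) is not an edge of T
  have hsab : s(a,b) ∉ T.edgeSet := by
    intro hmem
    have hTadj : T.Adj a b := hmem
    have hpath1 : (Walk.cons hTadj Walk.nil).IsPath := by simp [habne]
    have heq : (P : T.Walk a b) = Walk.cons hTadj Walk.nil :=
      (hT.existsUnique_path a b).unique P.2 hpath1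
    rw [heq] at hfP
    simp only [Walk.edges_cons, Walk.edges_nil, List.mem_singleton] at hfP
    rw [hfP] at hfw
    exact absurd rfl hfw.ne'
  -- a and b are not reachable after deleting f
  have hnab : ¬ Tm.Reachable a b := by
    rintro ⟨Q⟩
    have hQ : ∀ e ∈ Q.edges, e ∈ T.edgeSet := fun e he =>
      edgeSet_mono (deleteEdges_le _) (Q.edges_subset_edgeSet he)
    set Q' : T.Path a b := (Q.transfer T hQ).toPath with hQ'def
    have hQ'e : s(p,q) ∉ (Q' : T.Walk a b).edges := by
      intro hmem
      have h1 : s(p,q) ∈ (Q.transfer T hQ).edges := Walk.edges_bypass_subset _ hmem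
      rw [Walk.edges_transfer] at h1
      have h2 := Q.edges_subset_edgeSet h1
      rw [hTm, edgeSet_deleteEdges] at h2
      exact h2.2 rfl
    have hEq : (Q' : T.Walk a b) = (P : T.Walk a b) :=
      ((hT.existsUnique_path a b).unique Q'.2 P.2)
    exact hQ'e (hEq ▸ hfP)
  -- every vertex lies on the side of p or of q
  have hside : ∀ v : V, Tm.Reachable v p ∨ Tm.Reachable v q := by
    intro v
    rcases aux_delete_cases p q (hT.isConnected.preconnected v p) with h | ⟨h1, _⟩ | ⟨h1, _⟩
    · exact Or.inl h
    · exact Or.inl h1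
    · exact Or.inr h1
  set T' := Tm ⊔ fromEdgeSet {s(a,b)} with hT'def
  have hT'ab : T'.Adj a b := by
    rw [hT'def, sup_adj, fromEdgeSet_adj]
    exact Or.inr ⟨rfl, habne⟩
  have hmle : Tm ≤ T' := le_sup_left
  have hopp : (Tm.Reachable a p ∧ Tm.Reachable b q) ∨ (Tm.Reachable a q ∧ Tm.Reachable b p) := by
    rcases hside a with ha | ha <;> rcases hside b with hb | hb
    · exact absurd (ha.trans hb.symm) hnab
    · exact Or.inl ⟨ha, hb⟩
    · exact Or.inr ⟨ha, hb⟩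
    · exact absurd (ha.trans hb.symm) hnab
  have hreach_pq : T'.Reachable p q := by
    rcases hopp with ⟨h1, h2⟩ | ⟨h1, h2⟩
    · exact (h1.mono hmle).symm.trans (hT'ab.reachable.trans (h2.mono hmle))
    · exact (h2.mono hmle).symm.trans (hT'ab.symm.reachable.trans (h1.mono hmle))
  have hconn' : T'.Connected := by
    have hvreach : ∀ v : V, T'.Reachable v p := by
      intro v
      rcases hside v with h | h
      · exact h.mono hmle
      · exact (h.mono hmle).trans hreach_pq.symm
    haveI : Nonempty V := ⟨a⟩
    exact Connected.mk fun u v => (hvreach u).trans (hvreach v).symm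
  have hT'le : T' ≤ F := by
    refine sup_le ((deleteEdges_le _).trans hTle) ?_
    intro x y hxy
    rw [fromEdgeSet_adj] at hxy
    rcases Sym2.eq_iff.mp (Set.mem_singleton_iff.mp hxy.1) with ⟨rfl, rfl⟩ | ⟨rfl, rfl⟩
    · exact hab
    · exact hab.symm
  obtain ⟨T'', hT''le, hT''⟩ := aux_exists_spanning_tree hconn'
  -- weight computations
  have hconv : ∀ s : Set (Sym2 V), s.Finite := fun s => Set.toFinite s
  have hTfin := hconv T.edgeSet
  have hT'fin := hconv T'.edgeSet
  have hT''fin := hconv T''.edgeSet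
  have hT'edges : T'.edgeSet = (T.edgeSet \ {s(p,q)}) ∪ {s(a,b)} := by
    rw [hT'def, edgeSet_sup, hTm, edgeSet_deleteEdges, edgeSet_fromEdgeSet]
    ext e
    simp only [Set.mem_union, Set.mem_diff, Set.mem_singleton_iff, Set.mem_setOf_eq]
    constructor
    · rintro (h | ⟨h1, _⟩)
      · exact Or.inl h
      · exact Or.inr h1
    · rintro (h | h)
      · exact Or.inl h
      · exact Or.inr ⟨h, by rw [h]; simp [Sym2.mk_isDiag_iff, habne]⟩
  have hfmem : s(p,q) ∈ hTfin.toFinset := hTfin.mem_toFinset.mpr hfT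
  have hT'fs : hT'fin.toFinset = insert s(a,b) (hTfin.toFinset.erase s(p,q)) := by
    ext e
    simp only [Set.Finite.mem_toFinset, hT'edges, Set.mem_union, Set.mem_diff,
      Set.mem_singleton_iff, Finset.mem_insert, Finset.mem_erase]
    tauto
  have hsum' : ∑ e ∈ hT'fin.toFinset, w e
      = c + ∑ e ∈ hTfin.toFinset.erase s(p,q), w e := by
    rw [hT'fs, Finset.sum_insert (by
      rw [Finset.mem_erase, Set.Finite.mem_toFinset]
      rintro ⟨-, hmem⟩
      exact hsab hmem)]
  have hsumT : ∑ e ∈ hTfin.toFinset, w e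
      = w s(p,q) + ∑ e ∈ hTfin.toFinset.erase s(p,q), w e :=
    (Finset.add_sum_erase _ _ hfmem).symm
  have hsub : hT''fin.toFinset ⊆ hT'fin.toFinset := by
    intro e he
    rw [Set.Finite.mem_toFinset] at he ⊢
    exact edgeSet_mono hT''le he
  have hb1 : ∑ e ∈ hT''fin.toFinset, w e ≤ ∑ e ∈ hT'fin.toFinset, w e :=
    Finset.sum_le_sum_of_subset_of_nonneg hsub
      (fun e he _ => hw e (edgeSet_mono hT'le (hT'fin.mem_toFinset.mp he)))
  have hmin' := hmin T'' (hT''le.trans hT'le) hT''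
  rw [wsum_eq w hTfin, wsum_eq w hT''fin] at hmin'
  have hchain := hmin'.trans hb1
  rw [hsum'] at hchain
  rw [hsumT] at hchain
  linarith [hfw]

lemma aux_cc_card_eq {G H : SimpleGraph V} (hle : H ≤ G)
    (hr : ∀ u v : V, G.Reachable u v → H.Reachable u v) :
    Nat.card H.ConnectedComponent = Nat.card G.ConnectedComponent := by
  apply Nat.card_eq_of_bijective (ConnectedComponent.map (Hom.ofLE hle))
  constructor
  · intro x y
    refine ConnectedComponent.ind₂ (fun u v h => ?_) x y
    exact ConnectedComponent.sound (hr u v (ConnectedComponent.exact h))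
  · exact fun c => c.ind fun v => ⟨H.connectedComponentMk v, rfl⟩

lemma aux_integrand [Fintype V] {F T : SimpleGraph V} {w : Sym2 V → ℝ}
    (hw : ∀ e ∈ F.edgeSet, 0 ≤ w e) (hTle : T ≤ F) (hT : T.IsTree)
    (hmin : ∀ T' : SimpleGraph V, T' ≤ F → T'.IsTree →
      (∑ᶠ e ∈ T.edgeSet, w e) ≤ ∑ᶠ e ∈ T'.edgeSet, w e) (x : ℝ) :
    (Nat.card (levelGraph F w x).ConnectedComponent : ℝ) - 1
      = ∑ e ∈ (Set.toFinite T.edgeSet).toFinset, (if x < w e then (1:ℝ) else 0) := by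
  classical
  have hcc : Nat.card (levelGraph T w x).ConnectedComponent
      = Nat.card (levelGraph F w x).ConnectedComponent := by
    apply aux_cc_card_eq (levelGraph_mono_graph hTle w x)
    intro u v huv
    refine aux_reach_lift (fun s t hst => ?_) huv
    exact (aux_exchange hw hTle hT hmin hst.1).mono
      (levelGraph_mono_level T w hst.2)
  have hacyc : (levelGraph T w x).IsAcyclic :=
    aux_isAcyclic_mono (levelGraph_le T w x) hT.IsAcyclic
  have hcount := aux_card_cc_acyclic _ (levelGraph T w x) rfl hacyc
  haveI : Fintype T.edgeSet := (Set.toFinite _).fintype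
  have htree := hT.card_edgeFinset
  have hncard : T.edgeSet.ncard = T.edgeFinset.card := by
    rw [Set.ncard_eq_toFinset_card']
    apply congrArg Finset.card
    ext e
    simp
  set tf := (Set.toFinite T.edgeSet).toFinset with htf
  have htfcard : tf.card = T.edgeSet.ncard :=
    (Set.ncard_eq_toFinset_card _ (Set.toFinite _)).symm
  have hlev : (levelGraph T w x).edgeSet.ncard = (tf.filter fun e => w e ≤ x).card := by
    have : (levelGraph T w x).edgeSet = ↑(tf.filter fun e => w e ≤ x) := by
      ext e
      simp only [levelGraph_edgeSet, Set.mem_setOf_eq, Finset.coe_filter,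
        Set.Finite.mem_toFinset, htf]
    rw [this, Set.ncard_coe_finset]
  have hfilter := Finset.card_filter_add_card_filter_not
    (s := tf) (p := fun e => w e ≤ x)
  have hsum : ∑ e ∈ tf, (if x < w e then (1:ℝ) else 0)
      = ((tf.filter fun e => ¬ w e ≤ x).card : ℝ) := by
    have hfeq : (tf.filter fun e => x < w e) = tf.filter fun e => ¬ w e ≤ x := by
      apply Finset.filter_congr
      intro e _
      simp [not_le]
    rw [Finset.sum_boole, hfeq]
  rw [hsum, ← hcc]
  have h1 : (Nat.card (levelGraph T w x).ConnectedComponent : ℝ)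
      + ((levelGraph T w x).edgeSet.ncard : ℝ) = (Fintype.card V : ℝ) := by
    exact_mod_cast congrArg (Nat.cast (R := ℝ)) hcount
  have h2 : (T.edgeFinset.card : ℝ) + 1 = (Fintype.card V : ℝ) := by
    exact_mod_cast congrArg (Nat.cast (R := ℝ)) htree
  have h3 : ((tf.filter fun e => w e ≤ x).card : ℝ)
      + ((tf.filter fun e => ¬ w e ≤ x).card : ℝ) = (tf.card : ℝ) := by
    exact_mod_cast congrArg (Nat.cast (R := ℝ)) hfilter
  have h4 : (tf.card : ℝ) = (T.edgeFinset.card : ℝ) := by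
    rw [htfcard, hncard]
  rw [hlev] at h1
  linarith

end Aux

/-- For a connected weighted graph `F`, the weight of the minimum spanning tree equals
`∫_0^∞ (cc(F^{≤x}) − 1) dx`, where `cc(F^{≤x})` is the number of connected components of the
spanning subgraph consisting of the edges of weight at most `x`. -/
theorem mst_eq_integral_of_component_counts {V : Type*} [Fintype V]
    (F : SimpleGraph V) (hconn : F.Connected)
    (w : Sym2 V → ℝ) (hw : ∀ e ∈ F.edgeSet, 0 ≤ w e) :
    MSTweight F w =
      ∫ x in Set.Ioi (0:ℝ),
        ((Nat.card (levelGraph F w x).ConnectedComponent : ℝ) - 1) := by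
  classical
  set S := {x : ℝ | ∃ T : SimpleGraph V, T ≤ F ∧ T.IsTree ∧ x = ∑ᶠ e ∈ T.edgeSet, w e} with hS
  haveI : Finite (SimpleGraph V) :=
    Finite.of_injective (fun G : SimpleGraph V => G.Adj)
      (fun G H h => SimpleGraph.ext h)
  have hfinS : S.Finite := by
    apply Set.Finite.subset (Set.finite_range (fun T : SimpleGraph V => ∑ᶠ e ∈ T.edgeSet, w e))
    rintro x ⟨T, -, -, rfl⟩
    exact ⟨T, rfl⟩
  have hneS : S.Nonempty := by
    obtain ⟨T, hle, hT⟩ := aux_exists_spanning_tree hconn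
    exact ⟨_, T, hle, hT, rfl⟩
  obtain ⟨T, hTle, hTtree, hTw⟩ := hneS.csInf_mem hfinS
  have hmin : ∀ T' : SimpleGraph V, T' ≤ F → T'.IsTree →
      (∑ᶠ e ∈ T.edgeSet, w e) ≤ ∑ᶠ e ∈ T'.edgeSet, w e := by
    intro T' h1 h2
    rw [← hTw]
    exact csInf_le hfinS.bddBelow ⟨T', h1, h2, rfl⟩
  set tf := (Set.toFinite T.edgeSet).toFinset with htf
  have hwT : ∀ e ∈ tf, 0 ≤ w e := fun e he =>
    hw e (SimpleGraph.edgeSet_mono hTle ((Set.toFinite _).mem_toFinset.mp he))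
  have hval : ∀ c : ℝ, 0 ≤ c →
      ∫ x in Set.Ioi (0:ℝ), (if x < c then (1:ℝ) else 0) = c := by
    intro c hc
    have h1 : (fun x : ℝ => if x < c then (1:ℝ) else 0)
        = (Set.Iio c).indicator (fun _ => (1:ℝ)) := by
      funext x
      simp [Set.indicator_apply, Set.mem_Iio]
    rw [h1, setIntegral_indicator measurableSet_Iio, setIntegral_const,
      Set.Ioi_inter_Iio, measureReal_def, Real.volume_Ioo, smul_eq_mul, mul_one,
      ENNReal.toReal_ofReal (by linarith), sub_zero]
  have hint : ∀ e ∈ tf, Integrable (fun x => if x < w e then (1:ℝ) else 0)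
      (volume.restrict (Set.Ioi (0:ℝ))) := by
    intro e _
    have h1 : (fun x : ℝ => if x < w e then (1:ℝ) else 0)
        = (Set.Iio (w e)).indicator (fun _ => (1:ℝ)) := by
      funext x
      simp [Set.indicator_apply, Set.mem_Iio]
    rw [h1, integrable_indicator_iff measurableSet_Iio]
    apply (integrableOn_const_iff (C := (1:ℝ))).mpr
    right
    rw [Measure.restrict_apply measurableSet_Iio, Set.inter_comm, Set.Ioi_inter_Iio]
    exact measure_Ioo_lt_top
  have hpt : ∀ x : ℝ, ((Nat.card (levelGraph F w x).ConnectedComponent : ℝ) - 1)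
      = ∑ e ∈ tf, (if x < w e then (1:ℝ) else 0) :=
    fun x => aux_integrand hw hTle hTtree hmin x
  calc MSTweight F w = ∑ᶠ e ∈ T.edgeSet, w e := hTw
    _ = ∑ e ∈ tf, w e := wsum_eq w _
    _ = ∑ e ∈ tf, ∫ x in Set.Ioi (0:ℝ), (if x < w e then (1:ℝ) else 0) :=
        Finset.sum_congr rfl (fun e he => (hval (w e) (hwT e he)).symm)
    _ = ∫ x in Set.Ioi (0:ℝ), ∑ e ∈ tf, (if x < w e then (1:ℝ) else 0) :=
        (integral_finset_sum tf hint).symm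
    _ = ∫ x in Set.Ioi (0:ℝ),
          ((Nat.card (levelGraph F w x).ConnectedComponent : ℝ) - 1) := by
        simp only [hpt]
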